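/- Let {a_n} and {s_n} be the (4,1)-recurrent sequences with a_0 = a_1 = 1 and s_0 = 0, s_1 = 1. Then for all n ≥ 1, 2·Σ_{1 ≤ i < j ≤ n+1} a_i·a_{n+2-j} - Σ_{i=1}^{n} a_i·a_{n+1-i} = n·s_n. -/

import Mathlib

def seqA : ℕ → ℤ
  | 0 => 1
  | 1 => 1
  | n + 2 => 4 * seqA (n + 1) - seqA n

def seqS : ℕ → ℤ
  | 0 => 0
  | 1 => 1
  | n + 2 => 4 * seqS (n + 1) - seqS n

lemma key1 : ∀ n : ℕ, seqA (n + 1) = seqA n + 2 * seqS n := by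
  intro n
  induction n using Nat.twoStepInduction with
  | zero => simp [seqA, seqS]
  | one => simp [seqA, seqS]
  | more n ih1 ih2 =>
    show 4 * seqA (n + 2) - seqA (n + 1) = seqA (n + 2) + 2 * seqS (n + 2)
    rw [show seqS (n + 2) = 4 * seqS (n + 1) - seqS n from rfl,
        show seqA (n + 2) = 4 * seqA (n + 1) - seqA n from rfl] at *
    linarith

lemma key2 : ∀ n : ℕ, seqS (n + 1) = seqS n + seqA (n + 1) := by
  intro n
  induction n using Nat.twoStepInduction with
  | zero => simp [seqA, seqS]
  | one => simp [seqA, seqS]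
  | more n ih1 ih2 =>
    show 4 * seqS (n + 2) - seqS (n + 1) = seqS (n + 2) + seqA (n + 3)
    have ih2' : seqS (n + 2) = seqS (n + 1) + seqA (n + 2) := ih2
    have hk := key1 n
    rw [show seqA (n + 3) = 4 * seqA (n + 2) - seqA (n + 1) from rfl,
        show seqA (n + 2) = 4 * seqA (n + 1) - seqA n from rfl] at *
    linarith

lemma sumA : ∀ n : ℕ, ∑ i ∈ Finset.range n, seqA (i + 1) = seqS n := by
  intro n
  induction n with
  | zero => simp [seqS]
  | succ n ih => rw [Finset.sum_range_succ, ih, key2 n]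

lemma keyW : ∀ n : ℕ,
    (∑ i ∈ Finset.range n, (2 * seqS (i + 1) - seqA (i + 1)) * seqA (n - i))
      = (n : ℤ) * seqS n := by
  intro n
  induction n using Nat.twoStepInduction with
  | zero => simp [seqS]
  | one => norm_num [seqA, seqS]
  | more n ih1 ih2 =>
    rw [Finset.sum_range_succ, Finset.sum_range_succ]
    have e1 : n + 2 - n = 2 := by omega
    have e2 : n + 2 - (n + 1) = 1 := by omega
    rw [e1, e2]
    have hsum : (∑ i ∈ Finset.range n, (2 * seqS (i + 1) - seqA (i + 1)) * seqA (n + 2 - i))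
        = ∑ i ∈ Finset.range n, (4 * ((2 * seqS (i + 1) - seqA (i + 1)) * seqA (n + 1 - i))
            - (2 * seqS (i + 1) - seqA (i + 1)) * seqA (n - i)) := by
      apply Finset.sum_congr rfl
      intro i hi
      have hi' := Finset.mem_range.mp hi
      have h1 : n + 2 - i = (n - i) + 2 := by omega
      have h2 : n + 1 - i = (n - i) + 1 := by omega
      rw [h1, h2, show seqA ((n - i) + 2) = 4 * seqA ((n - i) + 1) - seqA (n - i) from rfl]
      ring
    rw [hsum, Finset.sum_sub_distrib, ← Finset.mul_sum, ih1]
    have hW1 : (∑ i ∈ Finset.range n, (2 * seqS (i + 1) - seqA (i + 1)) * seqA (n + 1 - i))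
        = ((n : ℤ) + 1) * seqS (n + 1) - (2 * seqS (n + 1) - seqA (n + 1)) * seqA 1 := by
      have := ih2
      rw [Finset.sum_range_succ] at this
      have e3 : n + 1 - n = 1 := by omega
      rw [e3] at this
      push_cast at this ⊢
      linarith
    rw [hW1]
    have h3 : seqS (n + 2) = 4 * seqS (n + 1) - seqS n := rfl
    have h4 : seqA (n + 2) = seqA (n + 1) + 2 * seqS (n + 1) := key1 (n + 1)
    have h5 : seqA 1 = 1 := rfl
    have h6 : seqA 2 = 3 := by norm_num [seqA]
    push_cast
    rw [h3, h4, h5, h6]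
    ring

theorem stmt_12 : ∀ n : ℕ, 1 ≤ n →
    2 * ∑ j ∈ Finset.Icc 1 (n + 1), ∑ i ∈ Finset.Ico 1 j, seqA i * seqA (n + 2 - j)
      - ∑ i ∈ Finset.Icc 1 n, seqA i * seqA (n + 1 - i)
      = (n : ℤ) * seqS n := by
  intro n _
  have hU : (∑ i ∈ Finset.Icc 1 n, seqA i * seqA (n + 1 - i))
      = ∑ i ∈ Finset.range n, seqA (i + 1) * seqA (n - i) := by
    rw [← Finset.Ico_add_one_right_eq_Icc, Finset.sum_Ico_eq_sum_range,
        show n + 1 - 1 = n from rfl]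
    apply Finset.sum_congr rfl
    intro i hi
    have hi' := Finset.mem_range.mp hi
    congr 1
    · congr 1; omega
    · congr 1; omega
  have hT : (∑ j ∈ Finset.Icc 1 (n + 1), ∑ i ∈ Finset.Ico 1 j, seqA i * seqA (n + 2 - j))
      = ∑ t ∈ Finset.range (n + 1), seqS t * seqA (n + 1 - t) := by
    rw [← Finset.Ico_add_one_right_eq_Icc, Finset.sum_Ico_eq_sum_range,
        show n + 1 + 1 - 1 = n + 1 from rfl]
    apply Finset.sum_congr rfl
    intro t ht
    have ht' := Finset.mem_range.mp ht
    rw [← Finset.sum_mul]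
    have hinner : (∑ i ∈ Finset.Ico 1 (1 + t), seqA i) = seqS t := by
      rw [Finset.sum_Ico_eq_sum_range]
      have : 1 + t - 1 = t := by omega
      rw [this, ← sumA t]
      apply Finset.sum_congr rfl
      intro i _
      congr 1; omega
    rw [hinner]
    congr 2
    omega
  rw [hU, hT]
  rw [Finset.sum_range_succ', show seqS 0 = 0 from rfl, zero_mul, add_zero]
  have hre : (∑ i ∈ Finset.range n, seqS (i + 1) * seqA (n + 1 - (i + 1)))
      = ∑ i ∈ Finset.range n, seqS (i + 1) * seqA (n - i) := by
    apply Finset.sum_congr rfl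
    intro i _
    congr 2; omega
  rw [hre, ← keyW n, Finset.mul_sum, ← Finset.sum_sub_distrib]
  apply Finset.sum_congr rfl
  intro i _
  ring
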